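/- Let q ≥ 2 be an integer and let λ ∈ {0, 1, …, q−1}. Then for every natural number a, u_q(aq + λ) = q·u_q(a) + (λ + 1 − q)·w_q(a) + q·a(a+1)/2 + (λ + 1 − q)·a. -/

import Mathlib

/-- `vq q n` is the `q`-adic valuation: `0` if `n = 0`, and otherwise the
largest `k` such that `q ^ k` divides `n`. -/
noncomputable def vq (q n : ℕ) : ℕ := if n = 0 then 0 else sSup {k : ℕ | q ^ k ∣ n}

/-- `wq q n = ∑_{i=0}^n vq q i`. -/
noncomputable def wq (q n : ℕ) : ℕ := ∑ i ∈ Finset.range (n + 1), vq q i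

/-- `uq q n = ∑_{i=0}^n wq q i`. -/
noncomputable def uq (q n : ℕ) : ℕ := ∑ i ∈ Finset.range (n + 1), wq q i

lemma vq_zero (q : ℕ) : vq q 0 = 0 := by simp [vq]

lemma bdd_vq {q n : ℕ} (hq : 2 ≤ q) (hn : n ≠ 0) : BddAbove {k : ℕ | q ^ k ∣ n} := by
  refine ⟨n, fun k hk => ?_⟩
  have h1 : q ^ k ≤ n := Nat.le_of_dvd (Nat.pos_of_ne_zero hn) hk
  have h2 : k < q ^ k := Nat.lt_pow_self (by omega : 1 < q)
  omega

lemma vq_of_not_dvd {q n : ℕ} (h : ¬ q ∣ n) : vq q n = 0 := by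
  have hn : n ≠ 0 := by rintro rfl; exact h (dvd_zero q)
  rw [vq, if_neg hn]
  have h0 : (0 : ℕ) ∈ {k : ℕ | q ^ k ∣ n} := by simp
  have : sSup {k : ℕ | q ^ k ∣ n} ≤ 0 := by
    apply csSup_le ⟨0, h0⟩
    intro k hk
    match k with
    | 0 => exact le_refl 0
    | (j+1) =>
      exfalso
      exact h (dvd_trans (dvd_pow_self q (Nat.succ_ne_zero j)) hk)
  omega

lemma vq_mul {q n : ℕ} (hq : 2 ≤ q) (hn : n ≠ 0) : vq q (q * n) = vq q n + 1 := by
  have hqn : q * n ≠ 0 := by positivity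
  rw [vq, if_neg hqn, vq, if_neg hn]
  have h0 : (0 : ℕ) ∈ {k : ℕ | q ^ k ∣ q * n} := by simp
  have h0' : (0 : ℕ) ∈ {k : ℕ | q ^ k ∣ n} := by simp
  apply le_antisymm
  · apply csSup_le ⟨0, h0⟩
    intro k hk
    match k with
    | 0 => omega
    | (j+1) =>
      have hj : q ^ j ∣ n := by
        have : q * q ^ j ∣ q * n := by rw [← pow_succ']; exact hk
        exact (Nat.mul_dvd_mul_iff_left (by omega : 0 < q)).mp this
      have : j ≤ sSup {k : ℕ | q ^ k ∣ n} := le_csSup (bdd_vq hq hn) hj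
      omega
  · apply le_csSup (bdd_vq hq hqn)
    have hmem : sSup {k : ℕ | q ^ k ∣ n} ∈ {k : ℕ | q ^ k ∣ n} :=
      Nat.sSup_mem ⟨0, h0'⟩ (bdd_vq hq hn)
    show q ^ (sSup {k : ℕ | q ^ k ∣ n} + 1) ∣ q * n
    rw [pow_succ']
    exact mul_dvd_mul_left q hmem

lemma wq_succ (q n : ℕ) : wq q (n + 1) = wq q n + vq q (n + 1) := by
  rw [wq, wq, Finset.sum_range_succ]

lemma uq_succ (q n : ℕ) : uq q (n + 1) = uq q n + wq q (n + 1) := by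
  rw [uq, uq, Finset.sum_range_succ]

lemma wq_partial {q : ℕ} (hq : 2 ≤ q) (a : ℕ) : ∀ r, r < q → wq q (a * q + r) = wq q (a * q) := by
  intro r hr
  induction r with
  | zero => rfl
  | succ r ih =>
    rw [show a * q + (r + 1) = (a * q + r) + 1 from rfl, wq_succ, ih (by omega)]
    have hnd : ¬ q ∣ a * q + r + 1 := by
      intro h
      have : q ∣ r + 1 := by
        have := (Nat.dvd_add_right ⟨a, (mul_comm a q)⟩).mp (by rwa [add_assoc] at h)
        exact this
      have := Nat.le_of_dvd (by omega) this
      omega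
    rw [vq_of_not_dvd hnd]
    omega

lemma wq_mul {q : ℕ} (hq : 2 ≤ q) (a : ℕ) : wq q (a * q) = wq q a + a := by
  induction a with
  | zero => simp [wq]
  | succ a ih =>
    have hsplit : (a + 1) * q = (a * q + (q - 1)) + 1 := by
      have : 1 ≤ q := by omega
      ring_nf
      omega
    rw [hsplit, wq_succ, wq_partial hq a (q - 1) (by omega), ih, ← hsplit]
    have : vq q ((a + 1) * q) = vq q (a + 1) + 1 := by
      rw [mul_comm]; exact vq_mul hq (Nat.succ_ne_zero a)
    rw [this, wq_succ]
    ring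

lemma wq_eq {q : ℕ} (hq : 2 ≤ q) (a r : ℕ) (hr : r < q) : wq q (a * q + r) = wq q a + a := by
  rw [wq_partial hq a r hr, wq_mul hq]

lemma tri_succ (a : ℕ) : (a + 1) * (a + 1 + 1) / 2 = a * (a + 1) / 2 + (a + 1) := by
  have h : (a + 1) * (a + 1 + 1) = a * (a + 1) + (a + 1) * 2 := by ring
  rw [h, Nat.add_mul_div_right _ _ (by norm_num : 0 < 2)]

theorem stmt_2 (q : ℕ) (hq : 2 ≤ q) (lam : ℕ) (hlam : lam < q) (a : ℕ) :
    (uq q (a * q + lam) : ℤ) =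
      (q : ℤ) * uq q a + ((lam : ℤ) + 1 - q) * wq q a
        + (q : ℤ) * (a * (a + 1) / 2 : ℕ) + ((lam : ℤ) + 1 - q) * a := by
  induction a with
  | zero =>
    have huq : uq q (0 * q + lam) = 0 := by
      rw [uq]
      apply Finset.sum_eq_zero
      intro m hm
      simp only [Finset.mem_range] at hm
      have : wq q (0 * q + m) = wq q 0 + 0 := wq_eq hq 0 m (by omega)
      simpa [wq, vq_zero] using this
    have h0 : uq q 0 = 0 := by simp [uq, wq, vq_zero]
    have h0' : wq q 0 = 0 := by simp [wq, vq_zero]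
    rw [huq, h0, h0']
    simp
  | succ a IH =>
    -- split the sum
    have hle1 : a * q + lam + 1 ≤ (a + 1) * q := by nlinarith
    have hle2 : (a + 1) * q ≤ (a + 1) * q + lam + 1 := by omega
    have hstep : uq q ((a + 1) * q + lam) =
        uq q (a * q + lam)
          + ∑ m ∈ Finset.Ico (a * q + lam + 1) ((a + 1) * q) , wq q m
          + ∑ m ∈ Finset.Ico ((a + 1) * q) ((a + 1) * q + lam + 1), wq q m := by
      rw [uq, uq]
      simp only [Finset.range_eq_Ico]
      rw [← Finset.sum_Ico_consecutive (wq q) (Nat.zero_le ((a + 1) * q)) hle2,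
        ← Finset.sum_Ico_consecutive (wq q) (Nat.zero_le (a * q + lam + 1)) hle1]
    have hsum1 : ∑ m ∈ Finset.Ico (a * q + lam + 1) ((a + 1) * q), wq q m
        = ((a + 1) * q - (a * q + lam + 1)) * (wq q a + a) := by
      have key : ∀ m ∈ Finset.Ico (a * q + lam + 1) ((a + 1) * q), wq q m = wq q a + a := by
        intro m hm
        simp only [Finset.mem_Ico] at hm
        have h1 : a * q ≤ m := by omega
        have h2 : m - a * q < q := by
          have : m < (a + 1) * q := hm.2
          have : m < a * q + q := by nlinarith
          omega
        have := wq_eq hq a (m - a * q) h2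
        rwa [Nat.add_sub_cancel' h1] at this
      rw [Finset.sum_congr rfl key, Finset.sum_const, Nat.card_Ico, smul_eq_mul]
    have hsum2 : ∑ m ∈ Finset.Ico ((a + 1) * q) ((a + 1) * q + lam + 1), wq q m
        = (lam + 1) * (wq q (a + 1) + (a + 1)) := by
      have key : ∀ m ∈ Finset.Ico ((a + 1) * q) ((a + 1) * q + lam + 1),
          wq q m = wq q (a + 1) + (a + 1) := by
        intro m hm
        simp only [Finset.mem_Ico] at hm
        have h1 : (a + 1) * q ≤ m := hm.1
        have h2 : m - (a + 1) * q < q := by omega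
        have := wq_eq hq (a + 1) (m - (a + 1) * q) h2
        rwa [Nat.add_sub_cancel' h1] at this
      rw [Finset.sum_congr rfl key, Finset.sum_const, Nat.card_Ico, smul_eq_mul]
      congr 1
      omega
    have hcard : ((a + 1) * q - (a * q + lam + 1) : ℕ) = q - (lam + 1) := by
      have : (a + 1) * q = a * q + q := by ring
      omega
    rw [hstep, hsum1, hsum2, hcard]
    have hwq1 : (wq q (a + 1) : ℤ) = wq q a + vq q (a + 1) := by
      rw [wq_succ]; push_cast; ring
    have huq1 : (uq q (a + 1) : ℤ) = uq q a + wq q (a + 1) := by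
      rw [uq_succ]; push_cast; ring
    have htri : ((a + 1) * (a + 1 + 1) / 2 : ℕ) = (a * (a + 1) / 2 : ℕ) + (a + 1) := tri_succ a
    have hcast : ((q - (lam + 1) : ℕ) : ℤ) = (q : ℤ) - (lam + 1) := by
      have : lam + 1 ≤ q := by omega
      push_cast [this]; ring
    push_cast [htri, hcast] at *
    rw [huq1, hwq1] at *
    linear_combination IH
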